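/- Let G be a bipartite graph in which every left vertex has degree exactly d, and let S be a finite set of left vertices such that every nonempty subset S' ⊆ S satisfies |N(S')| ≥ (2d/3)|S'|. Then for every nonempty subset S' ⊆ S, at least half of the vertices of N(S') are S'-leaf nodes; that is, the number of right vertices adjacent to exactly one vertex of S' is at least |N(S')|/2. -/

import Mathlib

/- STATEMENT 4: In a bipartite graph in which every left vertex has degree exactly `d`, if
`S` is a finite set of left vertices such that every nonempty `S' ⊆ S` satisfies
`|N(S')| ≥ (2d/3)|S'|`, then for every nonempty `S' ⊆ S` at least half of the vertices of
`N(S')` are `S'`-leaf nodes: the number of right vertices adjacent to exactly one vertex of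
`S'` is at least `|N(S')|/2`. -/
open Classical in
theorem stmt4 {V W : Type*} [Fintype V] [Fintype W] (Adj : V → W → Prop) (d : ℕ)
    (hdeg : ∀ j : V, ((Finset.univ : Finset W).filter (fun i => Adj j i)).card = d)
    (S : Finset V)
    (hexp : ∀ S' ⊆ S, S'.Nonempty →
      2 * (d : ℝ) / 3 * S'.card ≤
        (((Finset.univ : Finset W).filter (fun i => ∃ j ∈ S', Adj j i)).card : ℝ)) :
    ∀ S' ⊆ S, S'.Nonempty →
      (((Finset.univ : Finset W).filter (fun i => ∃ j ∈ S', Adj j i)).card : ℝ) / 2 ≤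
        (((Finset.univ : Finset W).filter
            (fun i => (S'.filter (fun j => Adj j i)).card = 1)).card : ℝ) := by
  intro S' hS' hne
  set c : W → ℕ := fun i => (S'.filter (fun j => Adj j i)).card with hc
  set N := (Finset.univ : Finset W).filter (fun i => ∃ j ∈ S', Adj j i) with hN
  set Lf := (Finset.univ : Finset W).filter (fun i => c i = 1) with hLf
  have hsub : Lf ⊆ N := by
    intro i hi
    simp only [hLf, Finset.mem_filter] at hi
    obtain ⟨j, hj⟩ := Finset.card_eq_one.mp hi.2
    have hjmem : j ∈ S'.filter (fun j => Adj j i) := by rw [hj]; simp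
    simp only [Finset.mem_filter] at hjmem
    simp only [hN, Finset.mem_filter]
    exact ⟨Finset.mem_univ _, j, hjmem.1, hjmem.2⟩
  -- double counting: total edges from S' equal d * |S'|
  have hdc : ∑ i ∈ N, c i = d * S'.card := by
    have h2 : ∑ i ∈ N, c i = ∑ i : W, c i := by
      apply Finset.sum_subset (Finset.subset_univ _)
      intro i _ hi
      simp only [hN, Finset.mem_filter, Finset.mem_univ, true_and, not_exists] at hi
      simp only [hc, Finset.card_eq_zero, Finset.filter_eq_empty_iff]
      intro j hj
      exact fun h => hi j ⟨hj, h⟩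
    have h1 : ∑ i : W, c i = ∑ j ∈ S', ((Finset.univ : Finset W).filter (fun i => Adj j i)).card := by
      simp_rw [hc, Finset.card_filter]
      exact Finset.sum_comm
    rw [h2, h1]
    simp [hdeg, mul_comm]
  -- each vertex of N has c ≥ 1, each non-leaf has c ≥ 2
  have hkey : 2 * N.card ≤ d * S'.card + Lf.card := by
    have hsplit : ∑ i ∈ N, c i = ∑ i ∈ Lf, c i + ∑ i ∈ N \ Lf, c i := by
      rw [← Finset.sum_union Finset.disjoint_sdiff, Finset.union_sdiff_of_subset hsub]
    have hL : ∑ i ∈ Lf, c i = Lf.card := by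
      rw [Finset.sum_congr rfl (fun i hi => (Finset.mem_filter.mp hi).2)]
      simp
      rfl
    have hM : 2 * (N \ Lf).card ≤ ∑ i ∈ N \ Lf, c i := by
      calc 2 * (N \ Lf).card
          = ∑ _i ∈ N \ Lf, 2 := by rw [Finset.sum_const, smul_eq_mul, mul_comm]
        _ ≤ ∑ i ∈ N \ Lf, c i := by
            apply Finset.sum_le_sum
            intro i hi
            have hiN := Finset.mem_sdiff.mp hi
            have h1 : 1 ≤ c i := by
              have := Finset.mem_filter.mp hiN.1
              obtain ⟨j, hj, hadj⟩ := this.2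
              exact Finset.card_pos.mpr ⟨j, Finset.mem_filter.mpr ⟨hj, hadj⟩⟩
            have hne1 : c i ≠ 1 := by
              intro h
              exact hiN.2 (Finset.mem_filter.mpr ⟨Finset.mem_univ _, h⟩)
            omega
    have hcards : N.card = Lf.card + (N \ Lf).card := by
      have hle := Finset.card_le_card hsub
      rw [Finset.card_sdiff_of_subset hsub]; omega
    generalize d * S'.card = m at hdc ⊢
    rw [hdc, hL] at hsplit
    linarith
  have hNcard : 2 * (d : ℝ) / 3 * S'.card ≤ (N.card : ℝ) := hexp S' hS' hne
  have hkeyR : 2 * (N.card : ℝ) ≤ (d : ℝ) * S'.card + (Lf.card : ℝ) := by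
    exact_mod_cast hkey
  linarith
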